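/- The topological frontier of the Dirichlet domain D equals the set of points of D̄ that admit a nontrivial focal equivalent; that is, ∂D = {H ∈ E : ‖H‖ ≤ ‖H + γ‖ for every γ ∈ Γ, and ‖H‖ = ‖H + γ₀‖ for some nonzero γ₀ ∈ Γ}. -/

import Mathlib

open Filter Topology Metric

/-- Proposition 4.3(iv) of [SS18]: the frontier of the Dirichlet domain `D` of a
full-rank lattice `Γ` is the set of points of `D̄` admitting a nontrivial focal
equivalent, i.e. those `H ∈ D̄` with `‖H‖ = ‖H + γ₀‖` for some nonzero `γ₀ ∈ Γ`. -/
theorem frontier_dirichlet_eq_focal {E : Type*}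
    [NormedAddCommGroup E] [InnerProductSpace ℝ E] [FiniteDimensional ℝ E]
    (Γ : AddSubgroup E) [DiscreteTopology Γ]
    (hspan : Submodule.span ℝ (Γ : Set E) = ⊤) :
    frontier {H : E | ∀ γ ∈ Γ, γ ≠ 0 → ‖H‖ < ‖H + γ‖} =
      {H : E | (∀ γ ∈ Γ, ‖H‖ ≤ ‖H + γ‖) ∧ ∃ γ₀ ∈ Γ, γ₀ ≠ 0 ∧ ‖H‖ = ‖H + γ₀‖} := by
  set D := {H : E | ∀ γ ∈ Γ, γ ≠ 0 → ‖H‖ < ‖H + γ‖} with hDdef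
  set Dbar := {H : E | ∀ γ ∈ Γ, ‖H‖ ≤ ‖H + γ‖} with hDbardef
  have hDsub : D ⊆ Dbar := by
    intro H hH γ hγ
    rcases eq_or_ne γ 0 with rfl | h
    · simp
    · exact (hH γ hγ h).le
  -- D is open
  have hopen : IsOpen D := by
    rw [isOpen_iff_mem_nhds]
    intro H hH
    have hΓclosed : IsClosed (Γ : Set E) := AddSubgroup.isClosed_of_discrete
    set R : ℝ := 2 * ‖H‖ + 2 with hR
    have hc : IsCompact ((Γ : Set E) ∩ Metric.closedBall 0 R) :=
      (isCompact_closedBall (0 : E) R).inter_left hΓclosed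
    haveI : DiscreteTopology ((Γ : Set E) ∩ Metric.closedBall 0 R : Set E) := by
      have : DiscreteTopology (Γ : Set E) := ‹DiscreteTopology Γ›
      exact DiscreteTopology.of_subset this Set.inter_subset_left
    have hfin : ((Γ : Set E) ∩ Metric.closedBall 0 R).Finite := hc.finite ⟨‹_›⟩
    set F : Set E := ((Γ : Set E) ∩ Metric.closedBall 0 R) \ {0} with hF
    have hFfin : F.Finite := hfin.diff
    set V : Set E := (⋂ γ ∈ F, {H' : E | ‖H'‖ < ‖H' + γ‖}) ∩ Metric.ball H 1 with hV
    have hVopen : IsOpen V := by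
      apply IsOpen.inter _ isOpen_ball
      refine hFfin.isOpen_biInter fun γ _ => ?_
      exact isOpen_lt continuous_norm ((continuous_id.add continuous_const).norm)
    have hHV : H ∈ V := by
      constructor
      · refine Set.mem_iInter₂.2 fun γ hγ => ?_
        exact hH γ hγ.1.1 hγ.2
      · exact mem_ball_self one_pos
    refine Filter.mem_of_superset (hVopen.mem_nhds hHV) ?_
    intro H' hH' γ hγ hγ0
    obtain ⟨hH'1, hH'2⟩ := hH'
    rcases le_or_gt ‖γ‖ R with hle | hgt
    · exact Set.mem_iInter₂.1 hH'1 γ ⟨⟨hγ, by simpa using hle⟩, hγ0⟩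
    · have h1 : ‖H'‖ < ‖H‖ + 1 := by
        have := mem_ball_iff_norm.1 hH'2
        calc ‖H'‖ = ‖(H' - H) + H‖ := by rw [sub_add_cancel]
          _ ≤ ‖H' - H‖ + ‖H‖ := norm_add_le _ _
          _ < 1 + ‖H‖ := by linarith
          _ = ‖H‖ + 1 := by ring
      have h2 : ‖γ‖ ≤ ‖H' + γ‖ + ‖H'‖ := by
        calc ‖γ‖ = ‖(H' + γ) - H'‖ := by rw [add_sub_cancel_left]
          _ ≤ ‖H' + γ‖ + ‖H'‖ := norm_sub_le _ _
      have hn : 0 ≤ ‖H‖ := norm_nonneg H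
      linarith
  -- key inner product characterization
  have hip : ∀ (H γ : E), ‖H‖ ≤ ‖H + γ‖ ↔ 0 ≤ 2 * inner ℝ H γ + ‖γ‖ ^ 2 := by
    intro H γ
    have hexp : ‖H + γ‖ ^ 2 = ‖H‖ ^ 2 + 2 * inner ℝ H γ + ‖γ‖ ^ 2 := by
      rw [@norm_add_sq_real]
    constructor
    · intro h
      nlinarith [norm_nonneg H, norm_nonneg (H + γ)]
    · intro h
      nlinarith [norm_nonneg H, norm_nonneg (H + γ)]
  -- Dbar ⊆ closure D via scaling
  have hclosure : Dbar ⊆ closure D := by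
    intro H hH
    have htend : Tendsto (fun t : ℝ => t • H) (𝓝[<] (1:ℝ)) (𝓝 H) := by
      have : Tendsto (fun t : ℝ => t • H) (𝓝 (1:ℝ)) (𝓝 ((1:ℝ) • H)) :=
        (continuous_id.smul continuous_const).tendsto 1
      simpa using this.mono_left nhdsWithin_le_nhds
    refine mem_closure_of_tendsto htend ?_
    have hmem : Set.Ico (0:ℝ) 1 ∈ 𝓝[<] (1:ℝ) :=
      Ico_mem_nhdsLT_of_mem (by constructor <;> norm_num)
    refine Filter.mem_of_superset hmem ?_
    intro t ht
    intro γ hγ hγ0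
    have hbase : 0 ≤ 2 * inner ℝ H γ + ‖γ‖ ^ 2 := (hip H γ).1 (hH γ hγ)
    have hexp : ‖t • H + γ‖ ^ 2 = t^2 * ‖H‖ ^ 2 + 2 * (t * inner ℝ H γ) + ‖γ‖ ^ 2 := by
      rw [@norm_add_sq_real, norm_smul, real_inner_smul_left]
      simp [abs_of_nonneg ht.1]
      ring
    have hns : ‖t • H‖ = t * ‖H‖ := by
      rw [norm_smul]; simp [abs_of_nonneg ht.1]
    have hγpos : 0 < ‖γ‖ := norm_pos_iff.2 hγ0
    have : ‖t • H‖ ^ 2 < ‖t • H + γ‖ ^ 2 := by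
      rw [hexp, hns]
      nlinarith [mul_nonneg ht.1 hbase, mul_pos (sub_pos.2 ht.2) (pow_pos hγpos 2)]
    nlinarith [norm_nonneg (t • H), norm_nonneg (t • H + γ)]
  -- Dbar is closed
  have hDbarclosed : IsClosed Dbar := by
    have : Dbar = ⋂ γ ∈ (Γ : Set E), {H : E | ‖H‖ ≤ ‖H + γ‖} := by
      ext H; simp [hDbardef]
    rw [this]
    exact isClosed_biInter fun γ _ =>
      isClosed_le continuous_norm ((continuous_id.add continuous_const).norm)
  have hclD : closure D = Dbar :=
    le_antisymm (closure_minimal hDsub hDbarclosed) hclosure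
  -- conclude
  rw [frontier, hopen.interior_eq, hclD]
  ext H
  simp only [Set.mem_diff, Set.mem_setOf_eq, hDbardef, hDdef]
  constructor
  · rintro ⟨h1, h2⟩
    refine ⟨h1, ?_⟩
    push_neg at h2
    obtain ⟨γ₀, hγ₀, hne, hle⟩ := h2
    exact ⟨γ₀, hγ₀, hne, le_antisymm (h1 γ₀ hγ₀) hle⟩
  · rintro ⟨h1, γ₀, hγ₀, hne, heq⟩
    refine ⟨h1, fun h2 => ?_⟩
    exact absurd heq (h2 γ₀ hγ₀ hne).ne
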